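/- In a median graph, every interval [x,y] between two vertices is finite; more generally, the convex hull of any finite set of vertices is finite. -/

import Mathlib

open SimpleGraph

variable {X : Type*}

/-- The geodesic interval between `x` and `y`. -/
def interval (G : SimpleGraph X) (x y : X) : Set X :=
  {z | G.dist x z + G.dist z y = G.dist x y}

/-- A set is convex if it contains all geodesics between its points. -/
def IsConvexSet (G : SimpleGraph X) (A : Set X) : Prop :=
  ∀ x ∈ A, ∀ y ∈ A, interval G x y ⊆ A

/-- A median graph: connected, and every triple has a unique median. -/
def IsMedianGraph (G : SimpleGraph X) : Prop :=
  G.Connected ∧ ∀ x y z : X, ∃! m : X,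
    m ∈ interval G x y ∧ m ∈ interval G y z ∧ m ∈ interval G z x

/-- The cone at `y` away from `x`. -/
def cone (G : SimpleGraph X) (x y : X) : Set X :=
  {z | y ∈ interval G x z}

/-- A half-space: a convex set with convex complement. -/
def IsHalfspace (G : SimpleGraph X) (H : Set X) : Prop :=
  IsConvexSet G H ∧ IsConvexSet G Hᶜ

/-- Convex hull. -/
def convexHullG (G : SimpleGraph X) (A : Set X) : Set X :=
  ⋂₀ {B : Set X | IsConvexSet G B ∧ A ⊆ B}

/-- Inward edge boundary of a set. -/
def edgeBoundaryIn (G : SimpleGraph X) (H : Set X) : Set (X × X) :=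
  {e | G.Adj e.1 e.2 ∧ e.1 ∉ H ∧ e.2 ∈ H}

/-- Two sets are nested if one of the four corners is empty. -/
def Nested (A B : Set X) : Prop :=
  A ∩ B = ∅ ∨ A ∩ Bᶜ = ∅ ∨ Aᶜ ∩ B = ∅ ∨ Aᶜ ∩ Bᶜ = ∅

open Classical in
noncomputable def medianOf (G : SimpleGraph X) (x y z : X) : X :=
  if h : ∃! m : X, m ∈ interval G x y ∧ m ∈ interval G y z ∧ m ∈ interval G z x
  then h.choose else x

open Classical in
noncomputable def projOn (G : SimpleGraph X) (A : Set X) (x : X) : X :=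
  if h : ∃ p, p ∈ A ∧ ∀ a ∈ A, p ∈ interval G x a then h.choose else x


/-- Edges crossing out of a set. -/
def crossEdges (G : SimpleGraph X) (A : Set X) : Set (X × X) :=
  {e | G.Adj e.1 e.2 ∧ e.1 ∈ A ∧ e.2 ∉ A}

/-- Total vertex boundary of a set. -/
def vBoundary (G : SimpleGraph X) (A : Set X) : Set X :=
  {x | ∃ y, G.Adj x y ∧ ((x ∈ A ∧ y ∉ A) ∨ (x ∉ A ∧ y ∈ A))}

/-- Two sets are non-nested if all four corners are nonempty. -/
def NonNested (A B : Set X) : Prop :=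
  (A ∩ B).Nonempty ∧ (A ∩ Bᶜ).Nonempty ∧ (Aᶜ ∩ B).Nonempty ∧ (Aᶜ ∩ Bᶜ).Nonempty

/-- `H` is a successor of `K`: both are half-spaces, `K ⊊ H`, with no half-space
strictly in between. -/
def Successor (G : SimpleGraph X) (H K : Set X) : Prop :=
  IsHalfspace G H ∧ IsHalfspace G K ∧ K ⊂ H ∧
    ¬ ∃ L : Set X, IsHalfspace G L ∧ K ⊂ L ∧ L ⊂ H

/-- Adjacency of the hyperplanes of half-spaces `H`, `K`. -/
def HypAdj (G : SimpleGraph X) (H K : Set X) : Prop :=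
  H = K ∨ H = Kᶜ ∨ NonNested H K ∨
  Successor G H K ∨ Successor G K H ∨
  Successor G Hᶜ K ∨ Successor G K Hᶜ ∨
  Successor G H Kᶜ ∨ Successor G Kᶜ H ∨
  Successor G Hᶜ Kᶜ ∨ Successor G Kᶜ Hᶜ

/-- The Hamming cube on `{0,1}^n`: strings adjacent iff they differ in exactly one bit. -/
def hammingCube (n : ℕ) : SimpleGraph (Fin n → Bool) :=
  SimpleGraph.fromRel (fun a b => ∃! i : Fin n, a i ≠ b i)

/-- Oriented edges `e`, `f` are parallel sides of a square (4-cycle). -/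
def SquareParallel (G : SimpleGraph X) (e f : X × X) : Prop :=
  G.Adj e.1 e.2 ∧ G.Adj f.1 f.2 ∧ G.Adj e.1 f.1 ∧ G.Adj e.2 f.2 ∧ e.1 ≠ f.2 ∧ e.2 ≠ f.1

section MGAux
variable {G : SimpleGraph X}

private lemma mg_comm (G : SimpleGraph X) (a b : X) : G.dist a b = G.dist b a :=
  SimpleGraph.dist_comm

private lemma mg_left (G : SimpleGraph X) (x y : X) : x ∈ interval G x y := by
  show G.dist x x + G.dist x y = G.dist x y
  simp [SimpleGraph.dist_self]

private lemma mg_right (G : SimpleGraph X) (x y : X) : y ∈ interval G x y := by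
  show G.dist x y + G.dist y y = G.dist x y
  simp [SimpleGraph.dist_self]

private lemma mg_symm {x y z : X} (h : z ∈ interval G x y) : z ∈ interval G y x := by
  have h' : G.dist x z + G.dist z y = G.dist x y := h
  show G.dist y z + G.dist z x = G.dist y x
  have e1 := mg_comm G x z
  have e2 := mg_comm G z y
  have e3 := mg_comm G x y
  omega

/-- if `z ∈ [x,y]` and `w ∈ [x,z]` then `w ∈ [x,y]` and `z ∈ [w,y]`. -/
private lemma mg_trans (hc : G.Connected) {x y z w : X}
    (hz : z ∈ interval G x y) (hw : w ∈ interval G x z) :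
    w ∈ interval G x y ∧ z ∈ interval G w y := by
  have h1 : G.dist x z + G.dist z y = G.dist x y := hz
  have h2 : G.dist x w + G.dist w z = G.dist x z := hw
  have t1 : G.dist w y ≤ G.dist w z + G.dist z y := hc.dist_triangle
  have t2 : G.dist x y ≤ G.dist x w + G.dist w y := hc.dist_triangle
  constructor
  · show G.dist x w + G.dist w y = G.dist x y
    omega
  · show G.dist w z + G.dist z y = G.dist w y
    omega

/-- if `z ∈ [x,y]` and `w ∈ [z,y]` then `w ∈ [x,y]` and `z ∈ [x,w]`. -/
private lemma mg_trans' (hc : G.Connected) {x y z w : X}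
    (hz : z ∈ interval G x y) (hw : w ∈ interval G z y) :
    w ∈ interval G x y ∧ z ∈ interval G x w := by
  have h := mg_trans hc (mg_symm hz) (mg_symm hw)
  exact ⟨mg_symm h.1, mg_symm h.2⟩

private lemma mg_med_unique (hG : IsMedianGraph G) {x y z m₁ m₂ : X}
    (h₁ : m₁ ∈ interval G x y ∧ m₁ ∈ interval G y z ∧ m₁ ∈ interval G z x)
    (h₂ : m₂ ∈ interval G x y ∧ m₂ ∈ interval G y z ∧ m₂ ∈ interval G z x) : m₁ = m₂ := by
  obtain ⟨n, -, hu⟩ := hG.2 x y z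
  rw [hu m₁ h₁, hu m₂ h₂]

private lemma mg_adj_dist_ne (hG : IsMedianGraph G) {x u v : X} (h : G.Adj u v) :
    G.dist x u ≠ G.dist x v := by
  intro heq
  have hc := hG.1
  obtain ⟨m, ⟨h1, h2, h3⟩, -⟩ := hG.2 x u v
  have huv : G.dist u v = 1 := SimpleGraph.dist_eq_one_iff_adj.mpr h
  have e2 : G.dist u m + G.dist m v = G.dist u v := h2
  have hmu : G.dist u m = 0 ∨ G.dist m v = 0 := by omega
  rcases hmu with h0 | h0
  · have hum : u = m := (hc.dist_eq_zero_iff).mp h0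
    rw [← hum] at h3
    have e3 : G.dist v u + G.dist u x = G.dist v x := h3
    have c1 := mg_comm G x u
    have c2 := mg_comm G x v
    have c3 := mg_comm G u v
    omega
  · have hmv : m = v := (hc.dist_eq_zero_iff).mp h0
    rw [hmv] at h1
    have e1 : G.dist x v + G.dist v u = G.dist x u := h1
    have c3 := mg_comm G u v
    omega

private lemma mg_adj_cases (hG : IsMedianGraph G) {x u v : X} (h : G.Adj u v) :
    G.dist x v = G.dist x u + 1 ∨ G.dist x u = G.dist x v + 1 := by
  have hc := hG.1
  have t1 : G.dist x v ≤ G.dist x u + G.dist u v := hc.dist_triangle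
  have t2 : G.dist x u ≤ G.dist x v + G.dist v u := hc.dist_triangle
  have h1 : G.dist u v = 1 := SimpleGraph.dist_eq_one_iff_adj.mpr h
  have h2 : G.dist v u = 1 := SimpleGraph.dist_eq_one_iff_adj.mpr h.symm
  have h3 := mg_adj_dist_ne hG (x := x) h
  omega

private lemma mg_step (hc : G.Connected) {x y : X} (hxy : x ≠ y) :
    ∃ z, G.Adj x z ∧ G.dist x z = 1 ∧ G.dist z y + 1 = G.dist x y ∧ z ∈ interval G x y := by
  obtain ⟨p, hp⟩ := hc.exists_walk_length_eq_dist x y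
  cases p with
  | nil => exact absurd rfl hxy
  | @cons _ z _ hadj q =>
    rw [SimpleGraph.Walk.length_cons] at hp
    have h1 : G.dist x z = 1 := SimpleGraph.dist_eq_one_iff_adj.mpr hadj
    have h2 : G.dist z y ≤ q.length := SimpleGraph.dist_le q
    have h3 : G.dist x y ≤ G.dist x z + G.dist z y := hc.dist_triangle
    have h4 : G.dist x y ≠ 0 := by
      intro h0
      exact hxy ((hc.dist_eq_zero_iff).mp h0)
    refine ⟨z, hadj, h1, by omega, ?_⟩
    show G.dist x z + G.dist z y = G.dist x y
    omega

private lemma mg_interval_convex_aux (hG : IsMedianGraph G) :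
    ∀ n : ℕ, ∀ b w p q r : X, G.dist p q = n →
      p ∈ interval G b w → q ∈ interval G b w → r ∈ interval G p q →
      r ∈ interval G b w := by
  intro n
  induction n using Nat.strong_induction_on with
  | _ n IH =>
  intro b w p q r hn hp hq hr
  have hc := hG.1
  by_cases hrp : r = p
  · subst hrp; exact hp
  by_cases hrq : r = q
  · subst hrq; exact hq
  have hpq : p ≠ q := by
    rintro rfl
    have h1 : G.dist p r + G.dist r p = G.dist p p := hr
    have h2 : G.dist p p = 0 := SimpleGraph.dist_self
    have h3 : G.dist p r = 0 := by omega
    exact hrp ((hc.dist_eq_zero_iff).mp h3).symm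
  -- the four medians
  obtain ⟨m1, ⟨hm1a, hm1b, hm1c⟩, -⟩ := hG.2 p r w
  obtain ⟨m2, ⟨hm2a, hm2b, hm2c⟩, -⟩ := hG.2 p r b
  obtain ⟨m3, ⟨hm3a, hm3b, hm3c⟩, -⟩ := hG.2 q r w
  obtain ⟨m4, ⟨hm4a, hm4b, hm4c⟩, -⟩ := hG.2 q r b
  by_cases h1 : m1 = p
  case neg =>
    -- step from p toward m1, s ∈ [p,m1] ⊆ [p,r] ∩ [p,w]
    obtain ⟨s, hadj, hds, -, hsm⟩ := mg_step hc (fun h => h1 h.symm)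
    have hspr : s ∈ interval G p r := (mg_trans hc hm1a hsm).1
    have hspw : s ∈ interval G p w := (mg_trans hc (mg_symm hm1c) hsm).1
    have hsbw : s ∈ interval G b w := (mg_trans' hc hp hspw).1
    have hred := mg_trans hc hr hspr
    have hsq : G.dist s q + 1 = n := by
      have e : G.dist p s + G.dist s q = G.dist p q := hred.1
      omega
    exact IH (G.dist s q) (by omega) b w s q r rfl hsbw hq hred.2
  case pos =>
  by_cases h2 : m2 = p
  case neg =>
    obtain ⟨s, hadj, hds, -, hsm⟩ := mg_step hc (fun h => h2 h.symm)
    have hspr : s ∈ interval G p r := (mg_trans hc hm2a hsm).1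
    have hspb : s ∈ interval G p b := (mg_trans hc (mg_symm hm2c) hsm).1
    have hsbw : s ∈ interval G b w := by
      have e1 : G.dist b p + G.dist p w = G.dist b w := hp
      have e2 : G.dist p s + G.dist s b = G.dist p b := hspb
      have t1 : G.dist s w ≤ G.dist s p + G.dist p w := hc.dist_triangle
      have t2 : G.dist b w ≤ G.dist b s + G.dist s w := hc.dist_triangle
      have c1 := mg_comm G b p
      have c2 := mg_comm G s b
      have c3 := mg_comm G p s
      show G.dist b s + G.dist s w = G.dist b w
      omega
    have hred := mg_trans hc hr hspr
    have hsq : G.dist s q + 1 = n := by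
      have e : G.dist p s + G.dist s q = G.dist p q := hred.1
      omega
    exact IH (G.dist s q) (by omega) b w s q r rfl hsbw hq hred.2
  case pos =>
  by_cases h3 : m3 = q
  case neg =>
    obtain ⟨s, hadj, hds, -, hsm⟩ := mg_step hc (fun h => h3 h.symm)
    have hsqr : s ∈ interval G q r := (mg_trans hc hm3a hsm).1
    have hsqw : s ∈ interval G q w := (mg_trans hc (mg_symm hm3c) hsm).1
    have hsbw : s ∈ interval G b w := (mg_trans' hc hq hsqw).1
    have hred := mg_trans hc (mg_symm hr) hsqr
    have hsp : G.dist s p + 1 = n := by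
      have e : G.dist q s + G.dist s p = G.dist q p := hred.1
      have c := mg_comm G p q
      omega
    exact IH (G.dist s p) (by omega) b w s p r rfl hsbw hp hred.2
  case pos =>
  by_cases h4 : m4 = q
  case neg =>
    obtain ⟨s, hadj, hds, -, hsm⟩ := mg_step hc (fun h => h4 h.symm)
    have hsqr : s ∈ interval G q r := (mg_trans hc hm4a hsm).1
    have hsqb : s ∈ interval G q b := (mg_trans hc (mg_symm hm4c) hsm).1
    have hsbw : s ∈ interval G b w := by
      have e1 : G.dist b q + G.dist q w = G.dist b w := hq
      have e2 : G.dist q s + G.dist s b = G.dist q b := hsqb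
      have t1 : G.dist s w ≤ G.dist s q + G.dist q w := hc.dist_triangle
      have t2 : G.dist b w ≤ G.dist b s + G.dist s w := hc.dist_triangle
      have c1 := mg_comm G b q
      have c2 := mg_comm G s b
      have c3 := mg_comm G q s
      show G.dist b s + G.dist s w = G.dist b w
      omega
    have hred := mg_trans hc (mg_symm hr) hsqr
    have hsp : G.dist s p + 1 = n := by
      have e : G.dist q s + G.dist s p = G.dist q p := hred.1
      have c := mg_comm G p q
      omega
    exact IH (G.dist s p) (by omega) b w s p r rfl hsbw hp hred.2
  case pos =>
    -- all medians degenerate: p and q are both medians of (b, r, w)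
    subst h1; subst h2; subst h3; subst h4
    exact absurd (mg_med_unique hG (x := b) (y := r) (z := w)
      ⟨mg_symm hm2b, hm1b, mg_symm hp⟩ ⟨mg_symm hm4b, hm3b, mg_symm hq⟩) hpq

private lemma mg_interval_convex (hG : IsMedianGraph G) {a a' p q r : X}
    (hp : p ∈ interval G a a') (hq : q ∈ interval G a a') (hr : r ∈ interval G p q) :
    r ∈ interval G a a' :=
  mg_interval_convex_aux hG (G.dist p q) a a' p q r rfl hp hq hr
private lemma mg_interval_finite_aux (hG : IsMedianGraph G) :
    ∀ n : ℕ, ∀ x y : X, G.dist x y = n → (interval G x y).Finite := by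
  intro n
  induction n using Nat.strong_induction_on with
  | _ n IH =>
  intro x y hn
  have hc := hG.1
  by_cases hn0 : n = 0
  · subst hn0
    apply Set.Finite.subset (Set.finite_singleton x)
    intro z hz
    have h1 : G.dist x z + G.dist z y = G.dist x y := hz
    have h2 : G.dist x z = 0 := by omega
    have := (hc.dist_eq_zero_iff).mp h2
    simp [this]
  · have hxy : x ≠ y := by
      rintro rfl
      rw [SimpleGraph.dist_self] at hn
      exact hn0 hn.symm
    obtain ⟨z, hadj, hdz, hdzy, hzxy⟩ := mg_step hc hxy
    -- the "median with (z, y)" map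
    have hFz : ∀ w : X, ∃ m, m ∈ interval G w z ∧ m ∈ interval G z y ∧ m ∈ interval G y w :=
      fun w => (hG.2 w z y).exists
    set F : X → X := fun w => (hFz w).choose with hFdef
    have hFspec : ∀ w : X, F w ∈ interval G w z ∧ F w ∈ interval G z y ∧ F w ∈ interval G y w :=
      fun w => (hFz w).choose_spec
    have hIHzy : (interval G z y).Finite := IH (G.dist z y) (by omega) z y rfl
    -- numeric properties of F on Q
    have key : ∀ w, w ∈ interval G x y → z ∉ interval G x w →
        G.dist w (F w) = 1 ∧ G.dist z (F w) = G.dist x w ∧ G.dist z w = G.dist x w + 1 ∧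
        G.dist x (F w) = G.dist x w + 1 := by
      intro w hw hzw
      have e1 : G.dist w (F w) + G.dist (F w) z = G.dist w z := (hFspec w).1
      have e2 : G.dist z (F w) + G.dist (F w) y = G.dist z y := (hFspec w).2.1
      have e3 : G.dist y (F w) + G.dist (F w) w = G.dist y w := (hFspec w).2.2
      have e4 : G.dist x w + G.dist w y = G.dist x y := hw
      have hzw2 : G.dist w z = G.dist w x + 1 := by
        rcases mg_adj_cases hG (x := w) hadj with h | h
        · exact h
        · exfalso
          apply hzw
          show G.dist x z + G.dist z w = G.dist x w
          have c1 := mg_comm G w x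
          have c2 := mg_comm G w z
          omega
      have c1 := mg_comm G w x
      have c2 := mg_comm G w z
      have c3 := mg_comm G z (F w)
      have c4 := mg_comm G y (F w)
      have c5 := mg_comm G y w
      have t1 : G.dist x (F w) ≤ G.dist x w + G.dist w (F w) := hc.dist_triangle
      have t2 : G.dist x y ≤ G.dist x (F w) + G.dist (F w) y := hc.dist_triangle
      have c6 := mg_comm G w (F w)
      omega
    -- covering
    have hcover : interval G x y ⊆
        interval G z y ∪ {w | w ∈ interval G x y ∧ z ∉ interval G x w} := by
      intro w hw
      by_cases hzw : z ∈ interval G x w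
      · left
        exact (mg_trans hc hw hzw).2
      · right
        exact ⟨hw, hzw⟩
    apply Set.Finite.subset _ hcover
    apply Set.Finite.union hIHzy
    -- Q is finite: F is injective on Q and maps into [z,y]
    apply Set.Finite.of_finite_image (f := F)
    · apply Set.Finite.subset hIHzy
      rintro v ⟨w, -, rfl⟩
      exact (hFspec w).2.1
    · rintro w1 ⟨hw1, hzw1⟩ w2 ⟨hw2, hzw2⟩ heq
      by_contra hne
      obtain ⟨k1a, k1b, k1c, k1d⟩ := key w1 hw1 hzw1
      obtain ⟨k2a, k2b, k2c, k2d⟩ := key w2 hw2 hzw2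
      rw [heq] at k1a k1b k1d
      set v := F w2 with hv
      -- dist x w1 = dist x w2
      have hxw : G.dist x w1 = G.dist x w2 := by omega
      have hd2 : G.dist w1 w2 = 2 := by
        have t := hc.dist_triangle (u := w1) (v := v) (w := w2)
        have c1 := mg_comm G w2 v
        have hne0 : G.dist w1 w2 ≠ 0 := fun h0 => hne ((hc.dist_eq_zero_iff).mp h0)
        have hne1 : G.dist w1 w2 ≠ 1 := fun h1 =>
          mg_adj_dist_ne hG (x := x) (SimpleGraph.dist_eq_one_iff_adj.mp h1) hxw
        omega
      -- the median below
      obtain ⟨M, ⟨hMa, hMb, hMc⟩, -⟩ := hG.2 w1 w2 x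
      have eMa : G.dist w1 M + G.dist M w2 = G.dist w1 w2 := hMa
      have eMb : G.dist w2 M + G.dist M x = G.dist w2 x := hMb
      have eMc : G.dist x M + G.dist M w1 = G.dist x w1 := hMc
      have c6 := mg_comm G w1 w2
      have c7 := mg_comm G x w1
      have c8 := mg_comm G x w2
      have c9 := mg_comm G x M
      have hMne1 : M ≠ w1 := by
        intro hMe
        rw [hMe] at eMb
        omega
      have hMne2 : M ≠ w2 := by
        intro hMe
        rw [hMe] at eMc
        omega
      have hM1 : G.dist w1 M = 1 ∧ G.dist M w2 = 1 := by
        have hh1 : G.dist w1 M ≠ 0 := fun h0 => hMne1 ((hc.dist_eq_zero_iff).mp h0).symm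
        have hh2 : G.dist M w2 ≠ 0 := fun h0 => hMne2 ((hc.dist_eq_zero_iff).mp h0)
        omega
      have hxM : G.dist x M + 1 = G.dist x w1 := by
        have c := mg_comm G M w1
        omega
      have hzM : G.dist z M = G.dist x M + 1 := by
        have t1 : G.dist z M ≤ G.dist z x + G.dist x M := hc.dist_triangle
        have t2 : G.dist z w1 ≤ G.dist z M + G.dist M w1 := hc.dist_triangle
        have ca := mg_comm G x z
        have cb := mg_comm G M w1
        omega
      -- v and M are both medians of (z, w1, w2)
      have hmedv : v ∈ interval G z w1 ∧ v ∈ interval G w1 w2 ∧ v ∈ interval G w2 z := by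
        have c1 := mg_comm G w1 v
        have c2 := mg_comm G w2 v
        refine ⟨?_, ?_, ?_⟩
        · show G.dist z v + G.dist v w1 = G.dist z w1
          omega
        · show G.dist w1 v + G.dist v w2 = G.dist w1 w2
          omega
        · show G.dist w2 v + G.dist v z = G.dist w2 z
          have c3 := mg_comm G z w2
          have c4 := mg_comm G z v
          omega
      have hmedM : M ∈ interval G z w1 ∧ M ∈ interval G w1 w2 ∧ M ∈ interval G w2 z := by
        have c1 := mg_comm G w1 M
        have c2 := mg_comm G M z
        refine ⟨?_, ?_, ?_⟩
        · show G.dist z M + G.dist M w1 = G.dist z w1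
          omega
        · exact hMa
        · show G.dist w2 M + G.dist M z = G.dist w2 z
          have c3 := mg_comm G z w2
          omega
      have : v = M := mg_med_unique hG hmedv hmedM
      rw [this] at k1d
      omega

private lemma mg_interval_finite (hG : IsMedianGraph G) (x y : X) :
    (interval G x y).Finite :=
  mg_interval_finite_aux hG (G.dist x y) x y rfl
/-- Contradiction block: `t, t'` distinct neighbours of `w`, both one step closer to `b`
and one step closer to `f` than `w`, with `t' ∈ [f,b]`: impossible in a median graph. -/
private lemma mg_blk (hG : IsMedianGraph G) {w b f t t' : X} (hne : t ≠ t')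
    (ha : G.Adj w t) (ha' : G.Adj w t')
    (hb : G.dist t b + 1 = G.dist w b) (hb' : G.dist t' b + 1 = G.dist w b)
    (hf : G.dist f t + 1 = G.dist f w) (hf' : G.dist f t' + 1 = G.dist f w)
    (htb : t' ∈ interval G f b) : False := by
  have hc := hG.1
  have hwt : G.dist w t = 1 := SimpleGraph.dist_eq_one_iff_adj.mpr ha
  have hwt' : G.dist w t' = 1 := SimpleGraph.dist_eq_one_iff_adj.mpr ha'
  have ctw := mg_comm G w t
  have ctw' := mg_comm G w t'
  have cbt := mg_comm G b t
  have cbt' := mg_comm G b t'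
  have ctt' := mg_comm G t t'
  have cft := mg_comm G f t
  have cft' := mg_comm G f t'
  have cbw := mg_comm G b w
  have htt : G.dist t t' = 2 := by
    have tr : G.dist t t' ≤ G.dist t w + G.dist w t' := hc.dist_triangle
    have h0 : G.dist t t' ≠ 0 := fun h0 => hne ((hc.dist_eq_zero_iff).mp h0)
    have h1 : G.dist t t' ≠ 1 := fun h1 =>
      mg_adj_dist_ne hG (x := b) (SimpleGraph.dist_eq_one_iff_adj.mp h1) (by omega)
    omega
  -- median towards b
  obtain ⟨s, ⟨hsa, hsb, hsc⟩, -⟩ := hG.2 t t' b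
  have esa : G.dist t s + G.dist s t' = G.dist t t' := hsa
  have esb : G.dist t' s + G.dist s b = G.dist t' b := hsb
  have esc : G.dist b s + G.dist s t = G.dist b t := hsc
  have cst := mg_comm G s t
  have cst' := mg_comm G s t'
  have cbs := mg_comm G b s
  have hs1 : G.dist t s = 1 ∧ G.dist s t' = 1 := by
    have h0 : G.dist t s ≠ 0 := by
      intro h0
      have : t = s := (hc.dist_eq_zero_iff).mp h0
      rw [← this] at esb
      omega
    have h0' : G.dist s t' ≠ 0 := by
      intro h0
      have : s = t' := (hc.dist_eq_zero_iff).mp h0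
      rw [this] at esc
      omega
    omega
  -- median towards f
  obtain ⟨s', ⟨hsa', hsb', hsc'⟩, -⟩ := hG.2 t t' f
  have esa' : G.dist t s' + G.dist s' t' = G.dist t t' := hsa'
  have esb' : G.dist t' s' + G.dist s' f = G.dist t' f := hsb'
  have esc' : G.dist f s' + G.dist s' t = G.dist f t := hsc'
  have cs't := mg_comm G s' t
  have cs't' := mg_comm G s' t'
  have cs'f := mg_comm G s' f
  have cfs := mg_comm G f s
  have hs1' : G.dist t s' = 1 ∧ G.dist s' t' = 1 := by
    have h0 : G.dist t s' ≠ 0 := by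
      intro h0
      have : t = s' := (hc.dist_eq_zero_iff).mp h0
      rw [← this] at esb'
      omega
    have h0' : G.dist s' t' ≠ 0 := by
      intro h0
      have : s' = t' := (hc.dist_eq_zero_iff).mp h0
      rw [this] at esc'
      omega
    omega
  by_cases hss : s = s'
  · -- then going from t' towards b and towards f is the same vertex: contradiction
    have hsfb : s ∈ interval G f b := (mg_trans' hc htb hsb).1
    have e1 : G.dist f s + G.dist s b = G.dist f b := hsfb
    have e2 : G.dist f t' + G.dist t' b = G.dist f b := htb
    have e3 : G.dist f s' = G.dist f s := by rw [hss]
    omega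
  · -- two medians for the triple (w, s, s')
    have hsb2 : G.dist s b + 2 = G.dist w b := by omega
    have hsf2 : G.dist f s' + 2 = G.dist f w := by omega
    have hws : G.dist w s = 2 := by
      have tr : G.dist w s ≤ G.dist w t + G.dist t s := hc.dist_triangle
      have h0 : G.dist w s ≠ 0 := by
        intro h0
        have : w = s := (hc.dist_eq_zero_iff).mp h0
        rw [← this] at hsb2
        omega
      have h1 : G.dist w s ≠ 1 := by
        intro h1
        rcases mg_adj_cases hG (x := b) (SimpleGraph.dist_eq_one_iff_adj.mp h1) with h | h <;> omega
      omega
    have hws' : G.dist w s' = 2 := by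
      have tr : G.dist w s' ≤ G.dist w t + G.dist t s' := hc.dist_triangle
      have h0 : G.dist w s' ≠ 0 := by
        intro h0
        have : w = s' := (hc.dist_eq_zero_iff).mp h0
        rw [← this] at hsf2
        omega
      have h1 : G.dist w s' ≠ 1 := by
        intro h1
        rcases mg_adj_cases hG (x := f) (SimpleGraph.dist_eq_one_iff_adj.mp h1) with h | h <;> omega
      omega
    have hss2 : G.dist s s' = 2 := by
      have tr : G.dist s s' ≤ G.dist s t + G.dist t s' := hc.dist_triangle
      have h0 : G.dist s s' ≠ 0 := fun h0 => hss ((hc.dist_eq_zero_iff).mp h0)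
      have h1 : G.dist s s' ≠ 1 := by
        intro h1
        apply mg_adj_dist_ne hG (x := t) (SimpleGraph.dist_eq_one_iff_adj.mp h1)
        omega
      omega
    have cws := mg_comm G w s
    have cws' := mg_comm G w s'
    have hmt : t ∈ interval G w s ∧ t ∈ interval G s s' ∧ t ∈ interval G s' w := by
      refine ⟨?_, ?_, ?_⟩
      · show G.dist w t + G.dist t s = G.dist w s
        omega
      · show G.dist s t + G.dist t s' = G.dist s s'
        omega
      · show G.dist s' t + G.dist t w = G.dist s' w
        omega
    have hmt' : t' ∈ interval G w s ∧ t' ∈ interval G s s' ∧ t' ∈ interval G s' w := by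
      refine ⟨?_, ?_, ?_⟩
      · show G.dist w t' + G.dist t' s = G.dist w s
        omega
      · show G.dist s t' + G.dist t' s' = G.dist s s'
        omega
      · show G.dist s' t' + G.dist t' w = G.dist s' w
        omega
    exact hne (mg_med_unique hG hmt hmt')
/-- Main lemma: if `w ∈ [u,v]` with `u ∈ [c,b]` and `v ∈ [c',b]`, then `w ∈ [e,b]`
for some `e ∈ [c,c']`. -/
private lemma mg_wlem (hG : IsMedianGraph G) :
    ∀ n : ℕ, ∀ w b u v c c' : X, G.dist w b = n →
      u ∈ interval G c b → v ∈ interval G c' b → w ∈ interval G u v →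
      ∃ e, e ∈ interval G c c' ∧ w ∈ interval G e b := by
  intro n
  induction n using Nat.strong_induction_on with
  | _ n IH =>
  intro w b u v c c' hn hu hv hw
  have hc := hG.1
  by_cases h1 : w ∈ interval G u b
  · exact ⟨c, mg_left G c c', (mg_trans' hc hu h1).1⟩
  by_cases h2 : w ∈ interval G v b
  · exact ⟨c', mg_right G c c', (mg_trans' hc hv h2).1⟩
  -- step towards the median of (u, w, b)
  obtain ⟨m1, ⟨hm1a, hm1b, hm1c⟩, -⟩ := hG.2 u w b
  have hm1w : w ≠ m1 := by
    intro hE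
    exact h1 (mg_symm (hE ▸ hm1c))
  obtain ⟨t1, hadj1, hdw1, -, ht1m⟩ := mg_step hc hm1w
  have ht1u : t1 ∈ interval G w u := (mg_trans hc (mg_symm hm1a) ht1m).1
  have ht1b : t1 ∈ interval G w b := (mg_trans hc hm1b ht1m).1
  have ht1db : G.dist t1 b + 1 = G.dist w b := by
    have e : G.dist w t1 + G.dist t1 b = G.dist w b := ht1b
    omega
  have pair1 := mg_trans hc hw (mg_symm ht1u)
  -- pair1 : t1 ∈ [u,v] ∧ w ∈ [t1,v]
  obtain ⟨f1, hf1cc, hf1⟩ := IH (G.dist t1 b) (by omega) t1 b u v c c' rfl hu hv pair1.1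
  -- step towards the median of (v, w, b)
  obtain ⟨m2, ⟨hm2a, hm2b, hm2c⟩, -⟩ := hG.2 v w b
  have hm2w : w ≠ m2 := by
    intro hE
    exact h2 (mg_symm (hE ▸ hm2c))
  obtain ⟨t2, hadj2, hdw2, -, ht2m⟩ := mg_step hc hm2w
  have ht2v : t2 ∈ interval G w v := (mg_trans hc (mg_symm hm2a) ht2m).1
  have ht2b : t2 ∈ interval G w b := (mg_trans hc hm2b ht2m).1
  have ht2db : G.dist t2 b + 1 = G.dist w b := by
    have e : G.dist w t2 + G.dist t2 b = G.dist w b := ht2b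
    omega
  have pair2 := mg_trans hc (mg_symm hw) (mg_symm ht2v)
  -- pair2 : t2 ∈ [v,u] ∧ w ∈ [t2,u]
  obtain ⟨f2, hf2cc, hf2⟩ := IH (G.dist t2 b) (by omega) t2 b u v c c' rfl hu hv
    (mg_symm pair2.1)
  -- t1 ≠ t2
  have ht12 : t1 ≠ t2 := by
    intro hE
    have e1 : G.dist t1 w + G.dist w v = G.dist t1 v := pair1.2
    have e2 : G.dist w t2 + G.dist t2 v = G.dist w v := ht2v
    have c1 := mg_comm G w t1
    rw [hE] at e1
    omega
  -- either we exit through f1/f2, or t1, t2 point back towards f1, f2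
  by_cases hwf1 : w ∈ interval G f1 b
  · exact ⟨f1, hf1cc, hwf1⟩
  have ht1f1 : G.dist f1 t1 + 1 = G.dist f1 w := by
    rcases mg_adj_cases hG (x := f1) hadj1 with h | h
    · exfalso
      apply hwf1
      have hwm : w ∈ interval G f1 t1 := by
        show G.dist f1 w + G.dist w t1 = G.dist f1 t1
        omega
      exact (mg_trans hc hf1 hwm).1
    · exact h.symm ▸ rfl
  by_cases hwf2 : w ∈ interval G f2 b
  · exact ⟨f2, hf2cc, hwf2⟩
  have ht2f2 : G.dist f2 t2 + 1 = G.dist f2 w := by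
    rcases mg_adj_cases hG (x := f2) hadj2 with h | h
    · exfalso
      apply hwf2
      have hwm : w ∈ interval G f2 t2 := by
        show G.dist f2 w + G.dist w t2 = G.dist f2 t2
        omega
      exact (mg_trans hc hf2 hwm).1
    · exact h.symm ▸ rfl
  -- claims A and B via the contradiction block
  have hA : G.dist f2 t1 = G.dist f2 w + 1 := by
    rcases mg_adj_cases hG (x := f2) hadj1 with h | h
    · exact h
    · exact absurd (mg_blk hG ht12 hadj1 hadj2 ht1db ht2db (by omega) ht2f2 hf2) False.elim
  have hB : G.dist f1 t2 = G.dist f1 w + 1 := by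
    rcases mg_adj_cases hG (x := f1) hadj2 with h | h
    · exact h
    · exact absurd (mg_blk hG (Ne.symm ht12) hadj2 hadj1 ht2db ht1db (by omega) ht1f1 hf1)
        False.elim
  -- the witness: median of (f1, f2, w)
  obtain ⟨e, ⟨hea, heb, hec⟩, -⟩ := hG.2 f1 f2 w
  refine ⟨e, mg_interval_convex hG hf1cc hf2cc hea, ?_⟩
  -- show w ∈ [e,b] via the median of (e, w, b)
  obtain ⟨q, ⟨hqa, hqb, hqc⟩, -⟩ := hG.2 e w b
  by_cases hqw : q = w
  · exact mg_symm (hqw ▸ hqc)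
  exfalso
  obtain ⟨t3, hadj3, hdw3, -, ht3m⟩ := mg_step hc (fun h => hqw h.symm)
  have ht3e : t3 ∈ interval G w e := (mg_trans hc (mg_symm hqa) ht3m).1
  have ht3b : t3 ∈ interval G w b := (mg_trans hc hqb ht3m).1
  have ht3db : G.dist t3 b + 1 = G.dist w b := by
    have e' : G.dist w t3 + G.dist t3 b = G.dist w b := ht3b
    omega
  have ht3f1 : t3 ∈ interval G w f1 := (mg_trans hc hec ht3e).1
  have ht3f2 : t3 ∈ interval G w f2 := (mg_trans hc (mg_symm heb) ht3e).1
  have ht3df1 : G.dist f1 t3 + 1 = G.dist f1 w := by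
    have e' : G.dist w t3 + G.dist t3 f1 = G.dist w f1 := ht3f1
    have c1 := mg_comm G w f1
    have c2 := mg_comm G t3 f1
    omega
  have ht3df2 : G.dist f2 t3 + 1 = G.dist f2 w := by
    have e' : G.dist w t3 + G.dist t3 f2 = G.dist w f2 := ht3f2
    have c1 := mg_comm G w f2
    have c2 := mg_comm G t3 f2
    omega
  have hne32 : t3 ≠ t2 := by
    intro hE
    rw [hE] at ht3df1
    omega
  exact mg_blk hG hne32 hadj3 hadj2 ht3db ht2db ht3df2 ht2f2 hf2
/-- Every interval of a median graph is finite. -/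
private lemma mg_singleton_convex (hc : G.Connected) (b : X) :
    IsConvexSet G ({b} : Set X) := by
  intro x hx y hy z hz
  rw [Set.mem_singleton_iff] at hx hy
  rw [hx, hy] at hz
  have h1 : G.dist b z + G.dist z b = G.dist b b := hz
  have h2 : G.dist b b = 0 := SimpleGraph.dist_self
  have h3 : G.dist b z = 0 := by omega
  exact Set.mem_singleton_iff.mpr ((hc.dist_eq_zero_iff).mp h3).symm

end MGAux

theorem interval_finite_and_convexHull_finite (G : SimpleGraph X) (hG : IsMedianGraph G) :
    (∀ x y : X, (interval G x y).Finite) ∧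
    (∀ A : Set X, A.Finite → (convexHullG G A).Finite) := by
  have hc := hG.1
  have hfin : ∀ x y : X, (interval G x y).Finite := fun x y => mg_interval_finite hG x y
  refine ⟨hfin, ?_⟩
  have hull_conv : ∀ A : Set X, IsConvexSet G (convexHullG G A) := by
    intro A x hx y hy z hz
    apply Set.mem_sInter.mpr
    intro B hB
    exact hB.1 x (Set.mem_sInter.mp hx B hB) y (Set.mem_sInter.mp hy B hB) hz
  have hull_min : ∀ (A B : Set X), IsConvexSet G B → A ⊆ B → convexHullG G A ⊆ B :=
    fun A B hB hAB x hx => Set.mem_sInter.mp hx B ⟨hB, hAB⟩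
  have subset_hull : ∀ A : Set X, A ⊆ convexHullG G A :=
    fun A x hx => Set.mem_sInter.mpr fun B hB => hB.2 hx
  have join_conv : ∀ (C : Set X) (b : X), IsConvexSet G C →
      IsConvexSet G (⋃ c ∈ C, interval G c b) := by
    intro C b hC u hu v hv w hw
    rw [Set.mem_iUnion₂] at hu hv
    obtain ⟨cu, hcu, hu'⟩ := hu
    obtain ⟨cv, hcv, hv'⟩ := hv
    obtain ⟨e, hecc, heb⟩ := mg_wlem hG (G.dist w b) w b u v cu cv rfl hu' hv' hw
    exact Set.mem_iUnion₂.mpr ⟨e, hC cu hcu cv hcv hecc, heb⟩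
  intro A hA
  refine Set.Finite.induction_on (motive := fun s _ => (convexHullG G s).Finite) A hA ?_ ?_
  · apply Set.Finite.subset (Set.finite_empty)
    apply hull_min
    · intro x hx y hy z hz
      exact absurd hx (Set.notMem_empty x)
    · exact Set.Subset.rfl
  · intro a s _ _ IH
    rcases Set.eq_empty_or_nonempty s with rfl | ⟨x0, hx0⟩
    · apply Set.Finite.subset (Set.finite_singleton a)
      apply hull_min _ _ (mg_singleton_convex hc a)
      simp
    · set C := convexHullG G s with hCdef
      have hCfin : C.Finite := IH
      have hJfin : (⋃ c ∈ C, interval G c a).Finite :=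
        Set.Finite.biUnion hCfin fun c _ => hfin c a
      apply Set.Finite.subset hJfin
      apply hull_min
      · exact join_conv C a (hull_conv s)
      · intro x hx
        rcases Set.mem_insert_iff.mp hx with rfl | hxs
        · exact Set.mem_iUnion₂.mpr ⟨x0, subset_hull s hx0, mg_right G x0 x⟩
        · exact Set.mem_iUnion₂.mpr ⟨x, subset_hull s hxs, mg_left G x a⟩
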